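/- Let n: D → ℝ³ be smooth with ‖n‖ = 1, and let ν, n satisfy along a flow the equations (D/dt)n = ν × n and ρJ(D/dt)ν = h × n for a vector field h, with the pointwise constraint n · ν = 0. Then ν = n × (D/dt)n, and n satisfies ρJ (D²/dt²) n − 2q n + h = 0 pointwise, where 2q := n·h − ρJ‖(D/dt)n‖². -/

import Mathlib

open Matrix

/-- Along a particle path (so that the material derivative `D/dt` becomes the
ordinary time derivative), suppose the unit director `n` and the microgyration
vector `ν` satisfy `Dn/Dt = ν × n`, `ρJ Dν/Dt = h × n` and the constraint
`n · ν = 0`.  Then `ν = n × Dn/Dt`, and `n` satisfies the Ericksen–Leslie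
director equation `ρJ D²n/Dt² − 2q n + h = 0` with
`2q := n·h − ρJ ‖Dn/Dt‖²`. -/
theorem stmt18 (ρ J : ℝ) (hρ : 0 < ρ) (hJ : 0 < J)
    (n ν h ν' n'' : ℝ → Fin 3 → ℝ)
    (hunit : ∀ t, n t ⬝ᵥ n t = 1)
    (horth : ∀ t, n t ⬝ᵥ ν t = 0)
    (hn : ∀ t, HasDerivAt n (crossProduct (ν t) (n t)) t)
    (hν : ∀ t, HasDerivAt ν (ν' t) t)
    (hνeq : ∀ t, (ρ * J) • ν' t = crossProduct (h t) (n t))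
    (hn'' : ∀ t, HasDerivAt (fun s => crossProduct (ν s) (n s)) (n'' t) t) :
    (∀ t, ν t = crossProduct (n t) (crossProduct (ν t) (n t))) ∧
    (∀ t, (ρ * J) • n'' t
        - (n t ⬝ᵥ h t -
            ρ * J * (crossProduct (ν t) (n t) ⬝ᵥ crossProduct (ν t) (n t))) • n t
        + h t = 0) := by
  have key : ∀ t, n'' t = crossProduct (ν' t) (n t)
      + crossProduct (ν t) (crossProduct (ν t) (n t)) := by
    intro t
    refine (hn'' t).unique ?_
    rw [hasDerivAt_pi]
    intro i
    have hνj : ∀ j, HasDerivAt (fun s => ν s j) (ν' t j) t :=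
      fun j => (hasDerivAt_pi.1 (hν t)) j
    have hnj : ∀ j, HasDerivAt (fun s => n s j) (crossProduct (ν t) (n t) j) t :=
      fun j => (hasDerivAt_pi.1 (hn t)) j
    fin_cases i
    · have hd := ((hνj 1).mul (hnj 2)).sub ((hνj 2).mul (hnj 1))
      have hd' := hd.congr_of_eventuallyEq
        (Filter.Eventually.of_forall (fun s => by simp [cross_apply] : ∀ s : ℝ,
          (fun x => crossProduct (ν x) (n x) 0) s = ν s 1 * n s 2 - ν s 2 * n s 1))
      convert hd' using 1
      all_goals simp [cross_apply]
      ring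
    · have hd := ((hνj 2).mul (hnj 0)).sub ((hνj 0).mul (hnj 2))
      have hd' := hd.congr_of_eventuallyEq
        (Filter.Eventually.of_forall (fun s => by simp [cross_apply] : ∀ s : ℝ,
          (fun x => crossProduct (ν x) (n x) 1) s = ν s 2 * n s 0 - ν s 0 * n s 2))
      convert hd' using 1
      all_goals simp [cross_apply]
      ring
    · have hd := ((hνj 0).mul (hnj 1)).sub ((hνj 1).mul (hnj 0))
      have hd' := hd.congr_of_eventuallyEq
        (Filter.Eventually.of_forall (fun s => by simp [cross_apply] : ∀ s : ℝ,
          (fun x => crossProduct (ν x) (n x) 2) s = ν s 0 * n s 1 - ν s 1 * n s 0))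
      convert hd' using 1
      all_goals simp [cross_apply]
      ring
  constructor
  · intro t
    have hu := hunit t
    have ho := horth t
    simp only [dotProduct, Fin.sum_univ_three] at hu ho
    funext i
    fin_cases i <;> simp [cross_apply]
    · linear_combination (- ν t 0) * hu + (n t 0) * ho
    · linear_combination (- ν t 1) * hu + (n t 1) * ho
    · linear_combination (- ν t 2) * hu + (n t 2) * ho
  · intro t
    have hu := hunit t
    have ho := horth t
    simp only [dotProduct, Fin.sum_univ_three] at hu ho
    have h0 : ρ * J * ν' t 0 = h t 1 * n t 2 - h t 2 * n t 1 := by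
      have := congrFun (hνeq t) 0; simpa [cross_apply] using this
    have h1 : ρ * J * ν' t 1 = h t 2 * n t 0 - h t 0 * n t 2 := by
      have := congrFun (hνeq t) 1; simpa [cross_apply] using this
    have h2 : ρ * J * ν' t 2 = h t 0 * n t 1 - h t 1 * n t 0 := by
      have := congrFun (hνeq t) 2; simpa [cross_apply] using this
    have k0 : n'' t 0 = ν' t 1 * n t 2 - ν' t 2 * n t 1
        + (ν t 1 * (ν t 0 * n t 1 - ν t 1 * n t 0)
          - ν t 2 * (ν t 2 * n t 0 - ν t 0 * n t 2)) := by
      have := congrFun (key t) 0; simpa [cross_apply] using this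
    have k1 : n'' t 1 = ν' t 2 * n t 0 - ν' t 0 * n t 2
        + (ν t 2 * (ν t 1 * n t 2 - ν t 2 * n t 1)
          - ν t 0 * (ν t 0 * n t 1 - ν t 1 * n t 0)) := by
      have := congrFun (key t) 1; simpa [cross_apply] using this
    have k2 : n'' t 2 = ν' t 0 * n t 1 - ν' t 1 * n t 0
        + (ν t 0 * (ν t 2 * n t 0 - ν t 0 * n t 2)
          - ν t 1 * (ν t 1 * n t 2 - ν t 2 * n t 1)) := by
      have := congrFun (key t) 2; simpa [cross_apply] using this
    have G0 : (ρ * J) * n'' t 0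
        - (n t ⬝ᵥ h t -
            ρ * J * (crossProduct (ν t) (n t) ⬝ᵥ crossProduct (ν t) (n t))) * n t 0
        + h t 0 = 0 := by
      simp only [dotProduct, Fin.sum_univ_three, cross_apply, Matrix.cons_val_zero,
        Matrix.cons_val_one, Matrix.head_cons, Matrix.cons_val_two, Matrix.tail_cons]
      linear_combination (ρ * J) * k0 + n t 2 * h1 - n t 1 * h2
        + (- h t 0 + ρ * J * n t 0 * (ν t 0 ^ 2 + ν t 1 ^ 2 + ν t 2 ^ 2)) * hu
        + (ρ * J * ν t 0 - ρ * J * n t 0 * (n t 0 * ν t 0 + n t 1 * ν t 1 + n t 2 * ν t 2)) * ho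
    have G1 : (ρ * J) * n'' t 1
        - (n t ⬝ᵥ h t -
            ρ * J * (crossProduct (ν t) (n t) ⬝ᵥ crossProduct (ν t) (n t))) * n t 1
        + h t 1 = 0 := by
      simp only [dotProduct, Fin.sum_univ_three, cross_apply, Matrix.cons_val_zero,
        Matrix.cons_val_one, Matrix.head_cons, Matrix.cons_val_two, Matrix.tail_cons]
      linear_combination (ρ * J) * k1 + n t 0 * h2 - n t 2 * h0
        + (- h t 1 + ρ * J * n t 1 * (ν t 0 ^ 2 + ν t 1 ^ 2 + ν t 2 ^ 2)) * hu
        + (ρ * J * ν t 1 - ρ * J * n t 1 * (n t 0 * ν t 0 + n t 1 * ν t 1 + n t 2 * ν t 2)) * ho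
    have G2 : (ρ * J) * n'' t 2
        - (n t ⬝ᵥ h t -
            ρ * J * (crossProduct (ν t) (n t) ⬝ᵥ crossProduct (ν t) (n t))) * n t 2
        + h t 2 = 0 := by
      simp only [dotProduct, Fin.sum_univ_three, cross_apply, Matrix.cons_val_zero,
        Matrix.cons_val_one, Matrix.head_cons, Matrix.cons_val_two, Matrix.tail_cons]
      linear_combination (ρ * J) * k2 + n t 1 * h0 - n t 0 * h1
        + (- h t 2 + ρ * J * n t 2 * (ν t 0 ^ 2 + ν t 1 ^ 2 + ν t 2 ^ 2)) * hu
        + (ρ * J * ν t 2 - ρ * J * n t 2 * (n t 0 * ν t 0 + n t 1 * ν t 1 + n t 2 * ν t 2)) * ho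
    funext i
    fin_cases i
    · exact G0
    · exact G1
    · exact G2
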